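/- Let c > 0 with 1/c an integer, and suppose the statement 'for every graph H of branch-length at least 4/c+5 there exists ε > 0 such that every ε-sparse (ε|G|^{1−c}, ε|G|)-coherent graph G with |G| > 1 contains H as an induced subgraph' holds. Then for all graphs H_1, H_2 of branch-length at least 4/c+5, there exists ε > 0 such that every graph G with |G| > 1 that contains neither H_1 nor the complement of H_2 as an induced subgraph has a pure pair A, B with |A| ≥ ε|G| and |B| ≥ ε|G|^{1−c}. -/

import Mathlib

/-- G contains H: some induced subgraph of G is isomorphic to H. -/
def Contains {V W : Type} (G : SimpleGraph V) (H : SimpleGraph W) : Prop :=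
  ∃ f : W → V, Function.Injective f ∧ ∀ a b : W, H.Adj a b ↔ G.Adj (f a) (f b)

/-- H has branch-length at least ℓ: every cycle has length at least ℓ, and every two
distinct vertices of degree at least three are at distance at least ℓ. -/
def BranchLengthGE {W : Type} (H : SimpleGraph W) (ℓ : ℝ) : Prop :=
  (∀ (v : W) (p : H.Walk v v), p.IsCycle → ℓ ≤ (p.length : ℝ)) ∧
  (∀ u v : W, u ≠ v → 3 ≤ {x | H.Adj u x}.ncard → 3 ≤ {x | H.Adj v x}.ncard →
    ∀ p : H.Walk u v, ℓ ≤ (p.length : ℝ))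

/-- G is ε-sparse: every vertex has degree less than ε|G|. -/
def EpsSparse {V : Type} [Fintype V] (G : SimpleGraph V) (ε : ℝ) : Prop :=
  ∀ v : V, ({u | G.Adj v u}.ncard : ℝ) < ε * Fintype.card V

/-- G is (α, β)-coherent: no disjoint anticomplete pair of sizes ≥ α, ≥ β. -/
def Coherent {V : Type} [Fintype V] (G : SimpleGraph V) (α β : ℝ) : Prop :=
  ¬ ∃ A B : Finset V, Disjoint A B ∧ (∀ a ∈ A, ∀ b ∈ B, ¬ G.Adj a b) ∧
    α ≤ (A.card : ℝ) ∧ β ≤ (B.card : ℝ)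

lemma contains_comap {U V W : Type} (K : SimpleGraph V) (g : U → V)
    (hg : Function.Injective g) (H : SimpleGraph W)
    (h : Contains (K.comap g) H) : Contains K H := by
  obtain ⟨f, hinj, hadj⟩ := h
  exact ⟨g ∘ f, hg.comp hinj, fun a b => hadj a b⟩

lemma contains_compl {V W : Type} (G : SimpleGraph V) (H : SimpleGraph W)
    (h : Contains Gᶜ H) : Contains G Hᶜ := by
  obtain ⟨f, hinj, hadj⟩ := h
  refine ⟨f, hinj, fun a b => ?_⟩
  simp only [SimpleGraph.compl_adj] at *
  constructor
  · rintro ⟨hab, hnH⟩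
    have := (hadj a b).not.mp hnH
    simp only [SimpleGraph.compl_adj, not_and, not_not] at this
    exact this (fun h => hab (hinj h))
  · intro hG
    have hne : f a ≠ f b := hG.ne
    refine ⟨fun h => hne (by rw [h]), fun hH => ?_⟩
    exact ((hadj a b).mp hH).2 hG

lemma lift_pair {V : Type} [Fintype V] (K : SimpleGraph V) (X : Finset V) (α β : ℝ)
    (h : ¬ Coherent (K.comap (Subtype.val : {x // x ∈ X} → V)) α β) :
    ∃ A B : Finset V, Disjoint A B ∧ (∀ a ∈ A, ∀ b ∈ B, ¬ K.Adj a b) ∧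
      α ≤ (A.card : ℝ) ∧ β ≤ (B.card : ℝ) := by
  rw [Coherent, not_not] at h
  obtain ⟨A, B, hdisj, hanti, hA, hB⟩ := h
  refine ⟨A.map ⟨Subtype.val, Subtype.val_injective⟩, B.map ⟨Subtype.val, Subtype.val_injective⟩,
    Finset.disjoint_map _ |>.mpr hdisj, ?_, by simpa using hA, by simpa using hB⟩
  intro a ha b hb
  simp only [Finset.mem_map, Function.Embedding.coeFn_mk] at ha hb
  obtain ⟨a', ha', rfl⟩ := ha
  obtain ⟨b', hb', rfl⟩ := hb
  exact hanti a' ha' b' hb'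

lemma sparse_comap {V : Type} [Fintype V] (K : SimpleGraph V) (X : Finset V) (ε : ℝ)
    (h : ∀ v ∈ X, ({u | u ∈ X ∧ K.Adj v u}.ncard : ℝ) < ε * X.card) :
    EpsSparse (K.comap (Subtype.val : {x // x ∈ X} → V)) ε := by
  intro v
  have himg : (Subtype.val '' {u : {x // x ∈ X} | K.Adj ↑v ↑u}) = {u | u ∈ X ∧ K.Adj ↑v u} := by
    ext u
    simp [Set.mem_image, Subtype.exists, and_comm]
  have hcard : ({u : {x // x ∈ X} | (K.comap Subtype.val).Adj v u}).ncard
      = ({u | u ∈ X ∧ K.Adj ↑v u}).ncard := by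
    rw [← himg, Set.ncard_image_of_injective _ Subtype.val_injective]
    rfl
  rw [hcard]
  have hcV : (Fintype.card {x // x ∈ X} : ℝ) = X.card := by
    simp [Fintype.card_coe]
  rw [hcV]
  exact h ↑v v.2

lemma bounds_main (c ε₀ δ' n x : ℝ) (hc : 0 < c) (hc1 : c ≤ 1) (hε₀ : 0 < ε₀)
    (hδ' : 0 < δ') (hδ'1 : δ' ≤ 1) (hn : 0 ≤ n) (hx : δ' * n ≤ x) :
    ε₀ * δ' * n ≤ ε₀ * x ∧ ε₀ * δ' * n ^ (1 - c) ≤ ε₀ * x ^ (1 - c) := by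
  constructor
  · nlinarith
  · have h1 : δ' ≤ δ' ^ (1 - c) := by
      have := Real.rpow_le_rpow_of_exponent_ge hδ' hδ'1 (by linarith : 1 - c ≤ 1)
      rwa [Real.rpow_one] at this
    have h2 : (δ' * n) ^ (1 - c) = δ' ^ (1 - c) * n ^ (1 - c) :=
      Real.mul_rpow hδ'.le hn
    have h3 : (δ' * n) ^ (1 - c) ≤ x ^ (1 - c) :=
      Real.rpow_le_rpow (by positivity) hx (by linarith)
    have h4 : (0:ℝ) ≤ n ^ (1 - c) := Real.rpow_nonneg hn _
    calc ε₀ * δ' * n ^ (1 - c) = ε₀ * (δ' * n ^ (1 - c)) := by ring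
      _ ≤ ε₀ * (δ' ^ (1 - c) * n ^ (1 - c)) :=
          mul_le_mul_of_nonneg_left (mul_le_mul_of_nonneg_right h1 h4) hε₀.le
      _ = ε₀ * (δ' * n) ^ (1 - c) := by rw [h2]
      _ ≤ ε₀ * x ^ (1 - c) := mul_le_mul_of_nonneg_left h3 hε₀.le

/-- reduction of the main theorem to the sparse case,
assuming Rödl's theorem as a hypothesis. -/
theorem stmt_10 (c : ℝ) (hc : 0 < c) (hci : ∃ m : ℕ, (m : ℝ) * c = 1)
    (rodl : ∀ (W : Type) [Fintype W] (H : SimpleGraph W) (η : ℝ), 0 < η →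
      ∃ δ : ℝ, 0 < δ ∧ ∀ (V : Type) [Fintype V] (G : SimpleGraph V), ¬ Contains G H →
        ∃ X : Finset V, δ * Fintype.card V ≤ (X.card : ℝ) ∧
          ((∀ v ∈ X, (({u | u ∈ X ∧ G.Adj v u}.ncard : ℝ) < η * X.card)) ∨
           (∀ v ∈ X, (({u | u ∈ X ∧ u ≠ v ∧ ¬ G.Adj v u}.ncard : ℝ) < η * X.card))))
    (sparsecase : ∀ (W : Type) [Fintype W] (H : SimpleGraph W), BranchLengthGE H (4 / c + 5) →
      ∃ ε : ℝ, 0 < ε ∧ ∀ (V : Type) [Fintype V] (G : SimpleGraph V), 1 < Fintype.card V →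
        EpsSparse G ε →
        Coherent G (ε * (Fintype.card V : ℝ) ^ (1 - c)) (ε * Fintype.card V) →
        Contains G H)
    (W₁ W₂ : Type) [Fintype W₁] [Fintype W₂] (H₁ : SimpleGraph W₁) (H₂ : SimpleGraph W₂)
    (h₁ : BranchLengthGE H₁ (4 / c + 5)) (h₂ : BranchLengthGE H₂ (4 / c + 5)) :
    ∃ ε : ℝ, 0 < ε ∧ ∀ (V : Type) [Fintype V] (G : SimpleGraph V), 1 < Fintype.card V →
      ¬ Contains G H₁ → ¬ Contains G H₂ᶜ →
      ∃ A B : Finset V, Disjoint A B ∧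
        ((∀ a ∈ A, ∀ b ∈ B, G.Adj a b) ∨ (∀ a ∈ A, ∀ b ∈ B, ¬ G.Adj a b)) ∧
        ε * Fintype.card V ≤ (A.card : ℝ) ∧
        ε * (Fintype.card V : ℝ) ^ (1 - c) ≤ (B.card : ℝ) := by
  -- c ≤ 1
  obtain ⟨m, hm⟩ := hci
  have hm1 : (1:ℝ) ≤ m := by
    rcases Nat.eq_zero_or_pos m with h0 | h0
    · subst h0; norm_num at hm
    · exact_mod_cast h0
  have hc1 : c ≤ 1 := by nlinarith
  obtain ⟨ε₁, hε₁, hs₁⟩ := sparsecase W₁ H₁ h₁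
  obtain ⟨ε₂, hε₂, hs₂⟩ := sparsecase W₂ H₂ h₂
  set η := min ε₁ ε₂ with hηdef
  have hη : 0 < η := lt_min hε₁ hε₂
  obtain ⟨δ, hδ, hrodl⟩ := rodl W₁ H₁ η hη
  set δ' := min δ 1 with hδ'def
  have hδ' : 0 < δ' := lt_min hδ one_pos
  have hδ'1 : δ' ≤ 1 := min_le_right _ _
  set ε := min (η * δ') δ' with hεdef
  have hε : 0 < ε := lt_min (mul_pos hη hδ') hδ'
  refine ⟨ε, hε, ?_⟩
  intro V _ G hV hG1 hG2
  obtain ⟨X, hXcard, hXcase⟩ := hrodl V G hG1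
  set n := (Fintype.card V : ℝ) with hndef
  have hn2 : 2 ≤ n := by
    have h2 : 2 ≤ Fintype.card V := hV
    rw [hndef]
    exact_mod_cast h2
  have hn0 : 0 ≤ n := by linarith
  have hδn : δ' * n ≤ (X.card : ℝ) := by
    refine le_trans ?_ hXcard
    have : δ' ≤ δ := min_le_left _ _
    nlinarith
  by_cases hX2 : 2 ≤ X.card
  · -- main case: X is big enough
    have hXcard2 : 1 < Fintype.card {x // x ∈ X} := by
      rw [Fintype.card_coe]; exact hX2
    have hXr : (0:ℝ) ≤ X.card := Nat.cast_nonneg _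
    have hcV : (Fintype.card {x // x ∈ X} : ℝ) = X.card := by
      simp [Fintype.card_coe]
    rcases hXcase with hsp | hsp
    · -- G sparse on X: use H₁
      have hnc : ¬ Contains (G.comap (Subtype.val : {x // x ∈ X} → V)) H₁ :=
        fun h => hG1 (contains_comap G _ Subtype.val_injective H₁ h)
      have hsparse : EpsSparse (G.comap (Subtype.val : {x // x ∈ X} → V)) ε₁ := by
        apply sparse_comap
        intro v hv
        refine lt_of_lt_of_le (hsp v hv) ?_
        have : η ≤ ε₁ := min_le_left _ _
        nlinarith
      have hNotCoh : ¬ Coherent (G.comap (Subtype.val : {x // x ∈ X} → V))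
          (ε₁ * (Fintype.card {x // x ∈ X} : ℝ) ^ (1 - c)) (ε₁ * Fintype.card {x // x ∈ X}) :=
        fun hcoh => hnc (hs₁ _ _ hXcard2 hsparse hcoh)
      obtain ⟨A, B, hdisj, hanti, hA, hB⟩ := lift_pair G X _ _ hNotCoh
      rw [hcV] at hA hB
      obtain ⟨hb1, hb2⟩ := bounds_main c ε₁ δ' n (X.card) hc hc1 hε₁ hδ' hδ'1 hn0 hδn
      refine ⟨B, A, hdisj.symm, Or.inr (fun a ha b hb hadj => hanti b hb a ha hadj.symm), ?_, ?_⟩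
      · calc ε * n ≤ η * δ' * n :=
              mul_le_mul_of_nonneg_right (min_le_left _ _) hn0
          _ ≤ ε₁ * δ' * n :=
              mul_le_mul_of_nonneg_right
                (mul_le_mul_of_nonneg_right (min_le_left _ _) hδ'.le) hn0
          _ ≤ ε₁ * X.card := hb1
          _ ≤ B.card := hB
      · have hnc0 : (0:ℝ) ≤ n ^ (1 - c) := Real.rpow_nonneg hn0 _
        calc ε * n ^ (1 - c) ≤ η * δ' * n ^ (1 - c) :=
              mul_le_mul_of_nonneg_right (min_le_left _ _) hnc0
          _ ≤ ε₁ * δ' * n ^ (1 - c) :=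
              mul_le_mul_of_nonneg_right
                (mul_le_mul_of_nonneg_right (min_le_left _ _) hδ'.le) hnc0
          _ ≤ ε₁ * (X.card : ℝ) ^ (1 - c) := hb2
          _ ≤ A.card := hA
    · -- complement sparse on X: use H₂
      have hnc : ¬ Contains (Gᶜ.comap (Subtype.val : {x // x ∈ X} → V)) H₂ :=
        fun h => hG2 (contains_compl G H₂ (contains_comap Gᶜ _ Subtype.val_injective H₂ h))
      have hsparse : EpsSparse (Gᶜ.comap (Subtype.val : {x // x ∈ X} → V)) ε₂ := by
        apply sparse_comap
        intro v hv
        have hseteq : {u | u ∈ X ∧ Gᶜ.Adj v u} = {u | u ∈ X ∧ u ≠ v ∧ ¬ G.Adj v u} := by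
          ext u
          simp only [Set.mem_setOf_eq, SimpleGraph.compl_adj]
          constructor
          · rintro ⟨h1, h2, h3⟩; exact ⟨h1, h2.symm, h3⟩
          · rintro ⟨h1, h2, h3⟩; exact ⟨h1, h2.symm, h3⟩
        rw [hseteq]
        refine lt_of_lt_of_le (hsp v hv) ?_
        have : η ≤ ε₂ := min_le_right _ _
        nlinarith
      have hNotCoh : ¬ Coherent (Gᶜ.comap (Subtype.val : {x // x ∈ X} → V))
          (ε₂ * (Fintype.card {x // x ∈ X} : ℝ) ^ (1 - c)) (ε₂ * Fintype.card {x // x ∈ X}) :=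
        fun hcoh => hnc (hs₂ _ _ hXcard2 hsparse hcoh)
      obtain ⟨A, B, hdisj, hanti, hA, hB⟩ := lift_pair Gᶜ X _ _ hNotCoh
      rw [hcV] at hA hB
      obtain ⟨hb1, hb2⟩ := bounds_main c ε₂ δ' n (X.card) hc hc1 hε₂ hδ' hδ'1 hn0 hδn
      have hcomplete : ∀ a ∈ B, ∀ b ∈ A, G.Adj a b := by
        intro a ha b hb
        have hne : b ≠ a := fun h => (Finset.disjoint_left.mp hdisj (h ▸ hb)) ha
        have := hanti b hb a ha
        rw [SimpleGraph.compl_adj, not_and, not_not] at this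
        exact (this hne).symm
      refine ⟨B, A, hdisj.symm, Or.inl hcomplete, ?_, ?_⟩
      · calc ε * n ≤ η * δ' * n :=
              mul_le_mul_of_nonneg_right (min_le_left _ _) hn0
          _ ≤ ε₂ * δ' * n :=
              mul_le_mul_of_nonneg_right
                (mul_le_mul_of_nonneg_right (min_le_right _ _) hδ'.le) hn0
          _ ≤ ε₂ * X.card := hb1
          _ ≤ B.card := hB
      · have hnc0 : (0:ℝ) ≤ n ^ (1 - c) := Real.rpow_nonneg hn0 _
        calc ε * n ^ (1 - c) ≤ η * δ' * n ^ (1 - c) :=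
              mul_le_mul_of_nonneg_right (min_le_left _ _) hnc0
          _ ≤ ε₂ * δ' * n ^ (1 - c) :=
              mul_le_mul_of_nonneg_right
                (mul_le_mul_of_nonneg_right (min_le_right _ _) hδ'.le) hnc0
          _ ≤ ε₂ * (X.card : ℝ) ^ (1 - c) := hb2
          _ ≤ A.card := hA
  · -- small case: X.card ≤ 1, so n ≤ 1/δ'
    push_neg at hX2
    have hX1 : (X.card : ℝ) ≤ 1 := by
      have : X.card ≤ 1 := by omega
      exact_mod_cast this
    obtain ⟨u, v, huv⟩ := Fintype.exists_pair_of_one_lt_card hV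
    have hεn1 : ε * n ≤ 1 := by
      have : ε ≤ δ' := min_le_right _ _
      nlinarith
    have hpow : n ^ (1 - c) ≤ n := by
      have := Real.rpow_le_rpow_of_exponent_le (by linarith : (1:ℝ) ≤ n)
        (by linarith : 1 - c ≤ 1)
      rwa [Real.rpow_one] at this
    have hεn2 : ε * n ^ (1 - c) ≤ 1 := by nlinarith
    refine ⟨{u}, {v}, Finset.disjoint_singleton.mpr huv, ?_, by simpa using hεn1, by simpa using hεn2⟩
    by_cases hadj : G.Adj u v
    · exact Or.inl (by simpa using hadj)
    · exact Or.inr (by simpa using hadj)
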